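/- For all nonnegative integers n, the tangent numbers satisfy (-1)^n * T_{2n+1} = sum_{j=0}^{2n} (-1)^j * 2^{2n-j} * (j+1)! * S(2n+1, j+1), where S denotes the Stirling numbers of the second kind. -/

import Mathlib

/-- Stirling numbers of the second kind, defined by the recursion
`S(0,0)=1`, `S(n,0)=S(0,m)=0` for `n,m ≥ 1`, `S(n+1,m+1)=S(n,m)+(m+1)*S(n,m+1)`. -/
def stirling2 : ℕ → ℕ → ℕ
  | 0, 0 => 1
  | 0, _ + 1 => 0
  | _ + 1, 0 => 0
  | n + 1, m + 1 => stirling2 n m + (m + 1) * stirling2 n (m + 1)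
/-- The tangent numbers `T_{2n+1}`, defined by `tan t = ∑_{n≥0} T_{2n+1} t^{2n+1}/(2n+1)!`,
i.e. as the Taylor coefficient `T_m = (d/dt)^m tan t |_{t=0}`. -/
noncomputable def tangentNumber (m : ℕ) : ℝ := iteratedDeriv m Real.tan 0

open Polynomial

lemma stirling2_eq_zero : ∀ n j, n < j → stirling2 n j = 0 := by
  intro n
  induction n with
  | zero => intro j hj; match j, hj with | k+1, _ => rfl
  | succ n ih =>
    intro j hj
    match j, hj with
    | m+1, hj =>
      show stirling2 n m + (m + 1) * stirling2 n (m + 1) = 0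
      rw [ih m (by omega), ih (m+1) (by omega)]
      ring

/-- Derivative polynomials of `tan`. -/
noncomputable def tpoly : ℕ → Polynomial ℤ
  | 0 => X
  | m+1 => (1 + X^2) * derivative (tpoly m)

/-- Derivative polynomials of `tanh`. -/
noncomputable def hpoly : ℕ → Polynomial ℤ
  | 0 => X
  | m+1 => (1 - X^2) * derivative (hpoly m)

lemma key (a : ℤ) (j : ℕ) :
    (1 - X^2) * derivative (C a * (1+X)^j * (1-X)) =
      C (2*j*a) * (1+X)^j * (1-X) - C ((j+1)*a) * (1+X)^(j+1) * (1-X) := by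
  cases j with
  | zero => simp [derivative_sub]; ring
  | succ j =>
    rw [derivative_mul, derivative_mul, derivative_pow]
    simp only [derivative_sub, derivative_add, derivative_one, derivative_X, derivative_C,
      Nat.add_sub_cancel, map_mul, map_add, map_ofNat, map_one, C_eq_natCast, Nat.cast_add,
      Nat.cast_one, zero_mul, zero_add, mul_one, mul_zero]
    ring

noncomputable def acoef (m j : ℕ) : ℤ :=
  (-1)^(j+1) * 2^(m+1-j) * ((Nat.factorial j * stirling2 (m+1) j : ℕ) : ℤ)

lemma acoef_key (m j : ℕ) (hj : j < m + 2) :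
    2*(j+1)*acoef m (j+1) - (j+1)*acoef m j = acoef (m+1) (j+1) := by
  have hstir : stirling2 (m+2) (j+1) = stirling2 (m+1) j + (j+1) * stirling2 (m+1) (j+1) := rfl
  rcases Nat.lt_or_ge j (m+1) with h | h
  · have e1 : m+1-(j+1) = m-j := by omega
    have e2 : m+1-j = (m-j)+1 := by omega
    have e3 : m+2-(j+1) = (m-j)+1 := by omega
    simp only [acoef, e1, e2, e3, hstir, Nat.factorial_succ]
    push_cast
    ring
  · have hj' : j = m+1 := by omega
    subst hj'
    have z : stirling2 (m+1) (m+2) = 0 := stirling2_eq_zero _ _ (by omega)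
    have e1 : m+1-(m+1+1) = 0 := by omega
    have e2 : m+1-(m+1) = 0 := by omega
    have e3 : m+2-(m+1+1) = 0 := by omega
    simp only [acoef, e1, e2, e3, hstir, z, Nat.factorial_succ]
    push_cast
    ring

lemma hpoly_formula (m : ℕ) :
    hpoly (m+1) = ∑ j ∈ Finset.range (m+2), C (acoef m j) * (1+X)^j * (1-X) := by
  induction m with
  | zero =>
    show (1 - X^2) * derivative X = _
    simp [acoef, Finset.sum_range_succ, stirling2, Nat.factorial]
    ring
  | succ m ih =>
    show (1 - X^2) * derivative (hpoly (m+1)) = _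
    rw [ih, map_sum, Finset.mul_sum]
    have step1 : ∀ j ∈ Finset.range (m+2),
        (1 - X^2) * derivative (C (acoef m j) * (1+X)^j * (1-X)) =
        C (2*j*acoef m j) * (1+X)^j * (1-X) - C ((j+1)*acoef m j) * (1+X)^(j+1) * (1-X) :=
      fun j _ => key _ _
    rw [Finset.sum_congr rfl step1, Finset.sum_sub_distrib]
    have hfirst : ∑ j ∈ Finset.range (m+2), C (2*j*acoef m j) * (1+X)^j * (1-X)
        = ∑ j ∈ Finset.range (m+2), C (2*(j+1)*acoef m (j+1)) * (1+X)^(j+1) * (1-X) := by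
      rw [Finset.sum_range_succ' (fun j => C (2*(j:ℤ)*acoef m j) * (1+X)^j * (1-X)) (m+1)]
      rw [Finset.sum_range_succ (fun j => C (2*((j:ℤ)+1)*acoef m (j+1)) * (1+X)^(j+1) * (1-X)) (m+1)]
      have z : acoef m (m+2) = 0 := by
        simp [acoef, stirling2_eq_zero (m+1) (m+2) (by omega)]
      push_cast
      simp [z]
    rw [hfirst, ← Finset.sum_sub_distrib]
    rw [Finset.sum_range_succ' (fun j => C (acoef (m+1) j) * (1+X)^j * (1-X)) (m+2)]
    have z0 : acoef (m+1) 0 = 0 := by simp [acoef]; rfl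
    rw [z0]
    simp only [map_zero, zero_mul, add_zero]
    refine Finset.sum_congr rfl fun j hj => ?_
    rw [← sub_mul, ← sub_mul, ← map_sub]
    have := acoef_key m j (Finset.mem_range.mp hj)
    push_cast at this ⊢
    rw [this]

lemma bridge (m : ℕ) :
    ((tpoly m).map (Int.castRingHom ℂ)).comp (C Complex.I * X) =
      C ((-Complex.I)^m * Complex.I) * ((hpoly m).map (Int.castRingHom ℂ)) := by
  induction m with
  | zero => simp [tpoly, hpoly]
  | succ m ih =>
    have hq : derivative (C Complex.I * X) = C Complex.I := by simp
    have h1 := congrArg derivative ih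
    rw [derivative_comp, hq, derivative_mul, derivative_C, zero_mul, zero_add] at h1
    set P := (tpoly m).map (Int.castRingHom ℂ)
    set H := (hpoly m).map (Int.castRingHom ℂ)
    have h2 : (derivative P).comp (C Complex.I * X) =
        C (-Complex.I) * (C ((-Complex.I)^m * Complex.I) * derivative H) := by
      rw [← h1, ← mul_assoc, ← C_mul]
      norm_num [Complex.I_mul_I]
    show ((((1:Polynomial ℤ) + X^2) * derivative (tpoly m)).map _).comp (C Complex.I * X) = _
    rw [Polynomial.map_mul, mul_comp, Polynomial.map_add, Polynomial.map_one, Polynomial.map_pow,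
      Polynomial.map_X, add_comp, one_comp, pow_comp, X_comp, ← derivative_map, h2]
    rw [hpoly.eq_2 m]
    rw [Polynomial.map_mul, Polynomial.map_sub, Polynomial.map_one, Polynomial.map_pow,
      Polynomial.map_X, ← derivative_map]
    have e1 : (C Complex.I * X : Polynomial ℂ)^2 = -X^2 := by
      rw [mul_pow, ← C_pow, Complex.I_sq, map_neg, map_one]; ring
    have e2 : C (-Complex.I) * C ((-Complex.I)^m * Complex.I)
        = C ((-Complex.I)^(m+1) * Complex.I) := by
      rw [← C_mul]; congr 1; ring
    rw [e1, ← mul_assoc (C (-Complex.I)), e2]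
    ring

lemma deriv_iter_tan (m : ℕ) : ∀ x ∈ Set.Ioo (-(Real.pi/2)) (Real.pi/2),
    deriv^[m] Real.tan x = ((tpoly m).map (Int.castRingHom ℝ)).eval (Real.tan x) := by
  induction m with
  | zero => intro x _; simp [tpoly]
  | succ m ih =>
    intro x hx
    have hcos : Real.cos x ≠ 0 := (Real.cos_pos_of_mem_Ioo hx).ne'
    rw [Function.iterate_succ_apply']
    have hEq : deriv^[m] Real.tan =ᶠ[nhds x]
        (fun y => ((tpoly m).map (Int.castRingHom ℝ)).eval (Real.tan y)) := by
      filter_upwards [isOpen_Ioo.mem_nhds hx] with y hy using ih y hy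
    rw [hEq.deriv_eq]
    have hd : HasDerivAt (fun y => ((tpoly m).map (Int.castRingHom ℝ)).eval (Real.tan y))
        ((derivative ((tpoly m).map (Int.castRingHom ℝ))).eval (Real.tan x) * (1 / Real.cos x ^ 2))
        x := (Polynomial.hasDerivAt _ _).comp x (Real.hasDerivAt_tan hcos)
    rw [hd.deriv]
    have htan : 1 / Real.cos x ^ 2 = 1 + Real.tan x ^ 2 := by
      rw [← Real.inv_one_add_tan_sq hcos, one_div, inv_inv]
    show _ = (((1 + X^2 : Polynomial ℤ) * derivative (tpoly m)).map (Int.castRingHom ℝ)).eval _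
    rw [Polynomial.map_mul, Polynomial.map_add, Polynomial.map_one, Polynomial.map_pow,
      Polynomial.map_X, ← derivative_map, eval_mul, eval_add, eval_one, eval_pow, eval_X, htan]
    ring

lemma tpoly_eval_zero (n : ℕ) :
    (tpoly (2*n+1)).eval 0 = (-1)^n * (hpoly (2*n+1)).eval 0 := by
  have hb := congrArg (eval (0:ℂ)) (bridge (2*n+1))
  rw [eval_comp, eval_mul, eval_C, eval_X, mul_zero, eval_mul, eval_C,
    Polynomial.eval_zero_map, Polynomial.eval_zero_map] at hb
  have hc : (-Complex.I)^(2*n+1) * Complex.I = (-1)^n := by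
    rw [pow_succ, pow_mul, neg_sq, Complex.I_sq, mul_assoc, neg_mul, Complex.I_mul_I]
    ring
  rw [hc] at hb
  simp only [Int.coe_castRingHom] at hb
  exact_mod_cast hb

theorem stmt17 (n : ℕ) :
    (-1 : ℝ) ^ n * tangentNumber (2 * n + 1) =
      ∑ j ∈ Finset.range (2 * n + 1),
        (-1 : ℝ) ^ j * 2 ^ (2 * n - j) * (Nat.factorial (j + 1) : ℝ) *
          (stirling2 (2 * n + 1) (j + 1) : ℝ) := by
  have h0 : (0:ℝ) ∈ Set.Ioo (-(Real.pi/2)) (Real.pi/2) := by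
    constructor <;> [linarith [Real.pi_pos]; linarith [Real.pi_pos]]
  have h1 : tangentNumber (2*n+1) = (((tpoly (2*n+1)).eval 0 : ℤ) : ℝ) := by
    rw [tangentNumber, iteratedDeriv_eq_iterate, deriv_iter_tan _ 0 h0, Real.tan_zero,
      Polynomial.eval_zero_map]
    simp
  have h2 : (hpoly (2*n+1)).eval 0 = ∑ j ∈ Finset.range (2*n+2), acoef (2*n) j := by
    rw [show (2*n+1) = (2*n)+1 from rfl, hpoly_formula, eval_finset_sum]
    refine Finset.sum_congr rfl fun j _ => ?_
    simp
  rw [h1, tpoly_eval_zero, h2]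
  push_cast
  rw [← mul_assoc]
  have : ((-1:ℝ)^n * (-1)^n) = 1 := by
    rw [← pow_add, ← two_mul, pow_mul]; norm_num
  rw [this, one_mul]
  rw [Finset.sum_range_succ' (fun j => ((acoef (2*n) j : ℤ) : ℝ)) (2*n+1)]
  have z0 : acoef (2*n) 0 = 0 := by simp [acoef]; rfl
  rw [z0]
  push_cast
  rw [add_zero]
  refine Finset.sum_congr rfl fun j hj => ?_
  have hj' : j < 2*n+1 := Finset.mem_range.mp hj
  have e1 : 2*n+1-(j+1) = 2*n-j := by omega
  simp only [acoef, e1]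
  push_cast
  ring
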